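/- Let S and 𝒜 be finite nonempty sets, P a transition kernel, r a reward function, γ ∈ (0,1), and let π₁, π₂ be policies with value functions V₁, V₂ (i.e., V₁ and V₂ satisfy the Bellman equations for π₁ and π₂ respectively). Let A₂(s,a) = r(s,a) + γ ∑_{s'} P(s'|s,a) V₂(s') − V₂(s) be the advantage of π₂. If (π₁(a|s) − π₂(a|s))·A₂(s,a) ≥ 0 for all (s,a) ∈ S × 𝒜, then V₁(s) ≥ V₂(s) for all s ∈ S. (Lemma 1 of the paper.) -/
import Mathlib


/-- Lemma 1: state-wise policy improvement from the sign condition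
`(π₁(a|s) − π₂(a|s)) · A^{π₂}(s,a) ≥ 0`. -/
theorem statewise_policy_improvement
    {S 𝒜 : Type*} [Fintype S] [Fintype 𝒜] [Nonempty S] [Nonempty 𝒜]
    (P : S → 𝒜 → S → ℝ) (r : S → 𝒜 → ℝ) (γ : ℝ)
    (hγ0 : 0 < γ) (hγ1 : γ < 1)
    (hPnn : ∀ s a s', 0 ≤ P s a s') (hPsum : ∀ s a, ∑ s', P s a s' = 1)
    (π₁ π₂ : S → 𝒜 → ℝ)
    (hπ₁nn : ∀ s a, 0 ≤ π₁ s a) (hπ₁sum : ∀ s, ∑ a, π₁ s a = 1)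
    (hπ₂nn : ∀ s a, 0 ≤ π₂ s a) (hπ₂sum : ∀ s, ∑ a, π₂ s a = 1)
    (V₁ V₂ : S → ℝ)
    (hV₁ : ∀ s, V₁ s = ∑ a, π₁ s a * (r s a + γ * ∑ s', P s a s' * V₁ s'))
    (hV₂ : ∀ s, V₂ s = ∑ a, π₂ s a * (r s a + γ * ∑ s', P s a s' * V₂ s'))
    (A₂ : S → 𝒜 → ℝ)
    (hA₂ : ∀ s a, A₂ s a = r s a + γ * ∑ s', P s a s' * V₂ s' - V₂ s)
    (h : ∀ s a, 0 ≤ (π₁ s a - π₂ s a) * A₂ s a) :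
    ∀ s, V₂ s ≤ V₁ s := by
  set f : S → ℝ := fun s => V₂ s - V₁ s with hf
  -- maximizing state
  obtain ⟨s₀, -, hs₀⟩ := Finset.exists_max_image Finset.univ f ⟨Classical.arbitrary S,
    Finset.mem_univ _⟩
  have hs₀' : ∀ s, f s ≤ f s₀ := fun s => hs₀ s (Finset.mem_univ s)
  -- ∑_a π₂ s a * A₂ s a = 0
  have hπ₂A : ∀ s, ∑ a, π₂ s a * A₂ s a = 0 := by
    intro s
    have : ∑ a, π₂ s a * A₂ s a
        = (∑ a, π₂ s a * (r s a + γ * ∑ s', P s a s' * V₂ s'))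
          - (∑ a, π₂ s a) * V₂ s := by
      rw [Finset.sum_mul, ← Finset.sum_sub_distrib]
      refine Finset.sum_congr rfl fun a _ => ?_
      rw [hA₂]; ring
    rw [this, ← hV₂, hπ₂sum]; ring
  -- ∑_a π₁ s a * A₂ s a ≥ 0
  have hπ₁A : ∀ s, 0 ≤ ∑ a, π₁ s a * A₂ s a := by
    intro s
    have := Finset.sum_nonneg (fun a (_ : a ∈ Finset.univ) => h s a)
    have heq : ∑ a, (π₁ s a - π₂ s a) * A₂ s a
        = (∑ a, π₁ s a * A₂ s a) - ∑ a, π₂ s a * A₂ s a := by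
      rw [← Finset.sum_sub_distrib]
      exact Finset.sum_congr rfl fun a _ => by ring
    rw [heq, hπ₂A] at this; linarith
  -- key recursion at s₀
  have key : f s₀ ≤ γ * f s₀ := by
    have hexp : f s₀ = -(∑ a, π₁ s₀ a * A₂ s₀ a)
        + γ * ∑ a, π₁ s₀ a * ∑ s', P s₀ a s' * f s' := by
      have hV2s : V₂ s₀ = ∑ a, π₁ s₀ a * V₂ s₀ := by
        rw [← Finset.sum_mul, hπ₁sum, one_mul]
      calc f s₀ = V₂ s₀ - V₁ s₀ := rfl
        _ = (∑ a, π₁ s₀ a * V₂ s₀)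
            - ∑ a, π₁ s₀ a * (r s₀ a + γ * ∑ s', P s₀ a s' * V₁ s') := by
            rw [← hV2s, ← hV₁]
        _ = ∑ a, π₁ s₀ a * (V₂ s₀ - (r s₀ a + γ * ∑ s', P s₀ a s' * V₁ s')) := by
            rw [← Finset.sum_sub_distrib]
            exact Finset.sum_congr rfl fun a _ => by ring
        _ = ∑ a, (-(π₁ s₀ a * A₂ s₀ a) + γ * (π₁ s₀ a * ∑ s', P s₀ a s' * f s')) := by
            refine Finset.sum_congr rfl fun a _ => ?_
            rw [hA₂]
            have : ∑ s', P s₀ a s' * f s'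
                = (∑ s', P s₀ a s' * V₂ s') - ∑ s', P s₀ a s' * V₁ s' := by
              rw [← Finset.sum_sub_distrib]
              exact Finset.sum_congr rfl fun s' _ => by ring
            rw [this]; ring
        _ = -(∑ a, π₁ s₀ a * A₂ s₀ a)
            + γ * ∑ a, π₁ s₀ a * ∑ s', P s₀ a s' * f s' := by
            rw [Finset.sum_add_distrib, ← Finset.sum_neg_distrib, ← Finset.mul_sum]
    have hbound : ∑ a, π₁ s₀ a * ∑ s', P s₀ a s' * f s' ≤ f s₀ := by
      have h1 : ∀ a, ∑ s', P s₀ a s' * f s' ≤ f s₀ := by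
        intro a
        calc ∑ s', P s₀ a s' * f s' ≤ ∑ s', P s₀ a s' * f s₀ :=
              Finset.sum_le_sum fun s' _ =>
                mul_le_mul_of_nonneg_left (hs₀' s') (hPnn s₀ a s')
          _ = f s₀ := by rw [← Finset.sum_mul, hPsum, one_mul]
      calc ∑ a, π₁ s₀ a * ∑ s', P s₀ a s' * f s'
          ≤ ∑ a, π₁ s₀ a * f s₀ :=
            Finset.sum_le_sum fun a _ =>
              mul_le_mul_of_nonneg_left (h1 a) (hπ₁nn s₀ a)
        _ = f s₀ := by rw [← Finset.sum_mul, hπ₁sum, one_mul]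
    have := hπ₁A s₀
    nlinarith [mul_le_mul_of_nonneg_left hbound hγ0.le]
  have hfs₀ : f s₀ ≤ 0 := by nlinarith
  intro s
  have := le_trans (hs₀' s) hfs₀
  simp only [hf] at this
  linarith
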